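/- arXiv:1611.03581 — 3 statements merged into one kernel-verified Lean document; each statement's English description precedes it below -/
import Mathlib

section
/- Let T > 0, 0 < ν₀ ≤ ν₁, η, ν ∈ [ν₀, ν₁], p ≥ 1, and h ∈ [0,1]. There exists a constant C = C(ν₀, ν₁, T, p) such that for every 0 < t ≤ T, ∫₀ᵗ s^{η-1}(t-s)^{ν-1}(|s^h - 1|^p + |(t-s)^h - 1|^p) ds ≤ C·h·t^{η+ν-1}(1 + |ln t|^p). -/
open MeasureTheory intervalIntegral
open Set

lemma betaIntegrable {a b t : ℝ} (ha : 0 < a) (hb : 0 < b) (ht : 0 < t) :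
    IntervalIntegrable (fun s : ℝ => s ^ (a-1) * (t - s) ^ (b-1)) volume 0 t := by
  have h2 : (0:ℝ) ≤ t/2 := by linarith
  apply IntervalIntegrable.trans (b := t/2)
  · apply IntervalIntegrable.mul_continuousOn
    · exact intervalIntegrable_rpow' (by linarith)
    · apply ContinuousOn.rpow_const
      · exact (continuous_const.sub continuous_id).continuousOn
      · intro x hx
        rw [uIcc_of_le h2] at hx
        left
        have := hx.2
        intro hc
        have : t - x = 0 := hc
        linarith [hx.2]
  · apply IntervalIntegrable.continuousOn_mul
    · have h1 : IntervalIntegrable (fun u : ℝ => u ^ (b-1)) volume 0 (t/2) :=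
        intervalIntegrable_rpow' (by linarith)
      have h2' := h1.comp_sub_left t
      have e1 : t - 0 = t := by ring
      have e2 : t - t/2 = t/2 := by ring
      rw [e1, e2] at h2'
      exact h2'.symm
    · apply ContinuousOn.rpow_const
      · exact continuous_id.continuousOn
      · intro x hx
        rw [uIcc_of_le (by linarith : t/2 ≤ t)] at hx
        left
        intro hc
        rw [hc] at hx
        linarith [hx.1]

lemma betaScale {a b : ℝ} {t : ℝ} (ht : 0 < t) :
    (∫ s in (0:ℝ)..t, s ^ (a-1) * (t - s) ^ (b-1))
      = t ^ (a+b-1) * ∫ θ in (0:ℝ)..1, θ ^ (a-1) * (1-θ) ^ (b-1) := by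
  have h1 := integral_comp_mul_right (a := 0) (b := 1) (fun s : ℝ => s ^ (a-1) * (t - s) ^ (b-1)) ht.ne'
  simp only [zero_mul, one_mul, smul_eq_mul] at h1
  have h2 : (∫ θ in (0:ℝ)..1, (θ * t) ^ (a-1) * (t - θ * t) ^ (b-1))
      = ∫ θ in (0:ℝ)..1, t ^ (a+b-2) * (θ ^ (a-1) * (1-θ) ^ (b-1)) := by
    rw [intervalIntegral.integral_of_le zero_le_one, intervalIntegral.integral_of_le zero_le_one]
    apply setIntegral_congr_fun measurableSet_Ioc
    intro θ hθ
    simp only []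
    have hθ0 : (0:ℝ) < θ := hθ.1
    have hθ1 : θ ≤ 1 := hθ.2
    have e0 : t - θ * t = (1 - θ) * t := by ring
    rw [Real.mul_rpow hθ0.le ht.le, e0, Real.mul_rpow (by linarith) ht.le,
      show a + b - 2 = (a-1) + (b-1) by ring, Real.rpow_add ht]
    ring
  rw [h2, intervalIntegral.integral_const_mul] at h1
  have h3 : (∫ s in (0:ℝ)..t, s ^ (a-1) * (t - s) ^ (b-1))
      = t * (t ^ (a+b-2) * ∫ θ in (0:ℝ)..1, θ ^ (a-1) * (1-θ) ^ (b-1)) := by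
    rw [h1, ← mul_assoc, mul_inv_cancel₀ ht.ne', one_mul]
  rw [h3, ← mul_assoc]
  congr 1
  rw [show t * t ^ (a+b-2) = t ^ (1:ℝ) * t ^ (a+b-2) by rw [Real.rpow_one],
    ← Real.rpow_add ht]
  ring_nf

lemma betaMono {a b c : ℝ} (hc : 0 < c) (ha : c ≤ a) (hb : c ≤ b) :
    (∫ θ in (0:ℝ)..1, θ ^ (a-1) * (1-θ) ^ (b-1))
      ≤ ∫ θ in (0:ℝ)..1, θ ^ (c-1) * (1-θ) ^ (c-1) := by
  rw [intervalIntegral.integral_of_le zero_le_one, intervalIntegral.integral_of_le zero_le_one,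
    integral_Ioc_eq_integral_Ioo, integral_Ioc_eq_integral_Ioo]
  apply setIntegral_mono_on
  · exact ((betaIntegrable (lt_of_lt_of_le hc ha) (lt_of_lt_of_le hc hb) one_pos).1).mono_set
      Ioo_subset_Ioc_self
  · exact ((betaIntegrable hc hc one_pos).1).mono_set Ioo_subset_Ioc_self
  · exact measurableSet_Ioo
  · intro θ hθ
    have h1 : θ ^ (a-1) ≤ θ ^ (c-1) :=
      Real.rpow_le_rpow_of_exponent_ge hθ.1 hθ.2.le (by linarith)
    have h2 : (1-θ) ^ (b-1) ≤ (1-θ) ^ (c-1) :=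
      Real.rpow_le_rpow_of_exponent_ge (by linarith [hθ.2]) (by linarith [hθ.1]) (by linarith)
    exact mul_le_mul h1 h2 (Real.rpow_nonneg (by linarith [hθ.2]) _)
      (Real.rpow_nonneg hθ.1.le _)

lemma powBound {u t T p h ε : ℝ} (hε : 0 < ε) (hu : 0 < u) (hut : u ≤ t) (htT : t ≤ T)
    (hh0 : 0 < h) (hh1 : h ≤ 1) (hp : 1 ≤ p) :
    |u ^ h - 1| ^ p
      ≤ h * max (1/ε) (1 + (T * (1 + |Real.log T|)) ^ p) * (1 + |Real.log t| + (t/u) ^ ε) := by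
  have hT0 : (0:ℝ) < T := lt_of_lt_of_le (lt_of_lt_of_le hu hut) htT
  have hKpos : (0:ℝ) ≤ T * (1 + |Real.log T|) :=
    mul_nonneg hT0.le (by positivity)
  set A := max (1/ε) (1 + (T * (1 + |Real.log T|)) ^ p) with hA
  have hA1 : (1:ℝ) ≤ A := le_max_of_le_right (le_add_of_nonneg_right (Real.rpow_nonneg hKpos p))
  have hAε : 1/ε ≤ A := le_max_left _ _
  have htu1 : (1:ℝ) ≤ t / u := (one_le_div hu).mpr hut
  have htuε : (0:ℝ) ≤ (t/u) ^ ε := Real.rpow_nonneg (by positivity) _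
  have hlt : (0:ℝ) ≤ |Real.log t| := abs_nonneg _
  rcases le_or_gt u 1 with hu1 | hu1
  · -- case u ≤ 1
    have hle1 : u ^ h ≤ 1 := Real.rpow_le_one hu.le hu1 hh0.le
    have habs : |u ^ h - 1| = 1 - u ^ h := by rw [abs_of_nonpos (by linarith)]; ring
    have hlogu : Real.log u ≤ 0 := Real.log_nonpos hu.le hu1
    -- 1 - u^h ≤ h * (-log u)
    have hexp : 1 + h * Real.log u ≤ u ^ h := by
      rw [Real.rpow_def_of_pos hu, mul_comm (Real.log u) h]
      have := Real.add_one_le_exp (h * Real.log u)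
      linarith
    have hb1 : 1 - u ^ h ≤ h * (-Real.log u) := by linarith
    -- |u^h-1|^p ≤ |u^h-1|
    have hb2 : |u ^ h - 1| ^ p ≤ |u ^ h - 1| := by
      rcases eq_or_lt_of_le (abs_nonneg (u ^ h - 1)) with h0 | h0
      · rw [← h0, Real.zero_rpow (by linarith)]
      · calc |u ^ h - 1| ^ p ≤ |u ^ h - 1| ^ (1:ℝ) :=
              Real.rpow_le_rpow_of_exponent_ge h0 (by rw [habs]; linarith [Real.rpow_nonneg hu.le h]) hp
          _ = |u ^ h - 1| := Real.rpow_one _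
    -- -log u ≤ |log t| + (1/ε) * (t/u)^ε
    have hlogdiv : Real.log (t/u) = Real.log t - Real.log u := Real.log_div (by linarith) hu.ne'
    have hlog_le : Real.log (t/u) ≤ (t/u) ^ ε / ε := by
      have h1 : Real.log ((t/u) ^ ε) ≤ (t/u) ^ ε - 1 :=
        Real.log_le_sub_one_of_pos (by positivity)
      rw [Real.log_rpow (by positivity)] at h1
      rw [le_div_iff₀ hε]
      nlinarith
    have hb3 : -Real.log u ≤ |Real.log t| + (1/ε) * (t/u) ^ ε := by
      have : -Real.log u = Real.log (t/u) - Real.log t := by rw [hlogdiv]; ring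
      rw [this]
      have h9 := neg_abs_le (Real.log t)
      have h10 : (t/u) ^ ε / ε = (1/ε) * (t/u) ^ ε := by ring
      linarith [hlog_le, h10.symm.le, h10.le]
    calc |u ^ h - 1| ^ p ≤ h * (-Real.log u) := le_trans hb2 (by rw [habs]; exact hb1)
      _ ≤ h * (|Real.log t| + (1/ε) * (t/u) ^ ε) := by
          exact mul_le_mul_of_nonneg_left hb3 hh0.le
      _ ≤ h * A * (1 + |Real.log t| + (t/u) ^ ε) := by
          have h1 : |Real.log t| ≤ A * |Real.log t| := le_mul_of_one_le_left hlt hA1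
          have h2 : (1/ε) * (t/u) ^ ε ≤ A * (t/u) ^ ε :=
            mul_le_mul_of_nonneg_right hAε htuε
          nlinarith
  · -- case 1 < u
    have ht1 : (1:ℝ) < t := lt_of_lt_of_le hu1 hut
    have hT1 : (1:ℝ) < T := lt_of_lt_of_le ht1 htT
    have hub : u ^ h ≤ u := by
      calc u ^ h ≤ u ^ (1:ℝ) := Real.rpow_le_rpow_of_exponent_le hu1.le hh1
        _ = u := Real.rpow_one _
    have hlb : (1:ℝ) ≤ u ^ h := by
      calc (1:ℝ) = u ^ (0:ℝ) := (Real.rpow_zero _).symm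
        _ ≤ u ^ h := Real.rpow_le_rpow_of_exponent_le hu1.le hh0.le
    have habs : |u ^ h - 1| = u ^ h - 1 := abs_of_nonneg (by linarith)
    -- u^h - 1 ≤ h * log u * u^h
    have hexp2 : u ^ h - 1 ≤ h * Real.log u * u ^ h := by
      have h1 : 1 - h * Real.log u ≤ Real.exp (-(h * Real.log u)) := by
        have := Real.add_one_le_exp (-(h * Real.log u))
        linarith
      have h2 : (0:ℝ) < u ^ h := by positivity
      rw [Real.rpow_def_of_pos hu, mul_comm (Real.log u) h]
      rw [Real.rpow_def_of_pos hu] at h2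
      have h3 := mul_le_mul_of_nonneg_left h1 h2.le
      rw [← Real.exp_add] at h3
      simp only [add_neg_cancel, Real.exp_zero, mul_comm (Real.log u) h] at h3
      nlinarith
    have hlogu : (0:ℝ) ≤ Real.log u := Real.log_nonneg hu1.le
    have hloguT : Real.log u ≤ Real.log T := Real.log_le_log hu (by linarith)
    have hK : h * Real.log u * u ^ h ≤ h * (T * (1 + |Real.log T|)) := by
      have h1 : Real.log u * u ^ h ≤ Real.log T * T := by
        have : u ^ h ≤ T := by linarith
        nlinarith [Real.log_nonneg hT1.le]
      have h2 : Real.log T * T ≤ T * (1 + |Real.log T|) := by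
        have := le_abs_self (Real.log T)
        nlinarith [abs_nonneg (Real.log T), hT1]
      nlinarith
    have hb : |u ^ h - 1| ^ p ≤ (h * (T * (1 + |Real.log T|))) ^ p := by
      apply Real.rpow_le_rpow (abs_nonneg _) _ (by linarith)
      rw [habs]; linarith
    have hb2 : (h * (T * (1 + |Real.log T|))) ^ p
        = h ^ p * (T * (1 + |Real.log T|)) ^ p := Real.mul_rpow hh0.le hKpos
    have hb3 : h ^ p ≤ h := by
      calc h ^ p ≤ h ^ (1:ℝ) := Real.rpow_le_rpow_of_exponent_ge hh0 hh1 hp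
        _ = h := Real.rpow_one _
    have hb4 : |u ^ h - 1| ^ p ≤ h * (T * (1 + |Real.log T|)) ^ p := by
      rw [hb2] at hb
      exact le_trans hb (mul_le_mul_of_nonneg_right hb3 (Real.rpow_nonneg hKpos _))
    have hA2 : (T * (1 + |Real.log T|)) ^ p ≤ A := by
      have : (T * (1 + |Real.log T|)) ^ p ≤ 1 + (T * (1 + |Real.log T|)) ^ p := by linarith
      exact le_trans this (le_max_right _ _)
    calc |u ^ h - 1| ^ p ≤ h * A := le_trans hb4 (mul_le_mul_of_nonneg_left hA2 hh0.le)
      _ ≤ h * A * (1 + |Real.log t| + (t/u) ^ ε) :=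
          le_mul_of_one_le_right (by positivity) (by linarith)

/-- Singular integral estimate: for `η, ν ∈ [ν₀,ν₁]`, `p ≥ 1`, `h ∈ [0,1]`,
`∫₀ᵗ s^(η-1)(t-s)^(ν-1)(|s^h-1|^p + |(t-s)^h-1|^p) ds ≤ C h t^(η+ν-1)(1+|ln t|^p)`. -/
theorem singular_integral_log_estimate (ν₀ ν₁ T p : ℝ)
    (h0 : 0 < ν₀) (h01 : ν₀ ≤ ν₁) (hT : 0 < T) (hp : 1 ≤ p) :
    ∃ C : ℝ, ∀ η ν h : ℝ, η ∈ Set.Icc ν₀ ν₁ → ν ∈ Set.Icc ν₀ ν₁ → h ∈ Set.Icc (0:ℝ) 1 →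
      ∀ t ∈ Set.Ioc (0:ℝ) T,
        (∫ s in (0:ℝ)..t, s ^ (η - 1) * (t - s) ^ (ν - 1) *
            (|s ^ h - 1| ^ p + |(t - s) ^ h - 1| ^ p))
          ≤ C * h * t ^ (η + ν - 1) * (1 + |Real.log t| ^ p) := by
  set ε := ν₀ / 2 with hεdef
  have hε : 0 < ε := by positivity
  set A := max (1/ε) (1 + (T * (1 + |Real.log T|)) ^ p) with hAdef
  have hA0 : (0:ℝ) < A :=
    lt_of_lt_of_le one_pos (le_max_of_le_right
      (le_add_of_nonneg_right (Real.rpow_nonneg (mul_nonneg hT.le (by positivity)) p)))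
  set B := ∫ θ in (0:ℝ)..1, θ ^ (ε-1) * (1-θ) ^ (ε-1) with hBdef
  have hB0 : (0:ℝ) ≤ B := by
    apply intervalIntegral.integral_nonneg zero_le_one
    intro θ hθ
    exact mul_nonneg (Real.rpow_nonneg hθ.1 _) (Real.rpow_nonneg (by linarith [hθ.2]) _)
  refine ⟨8 * A * B, ?_⟩
  intro η ν h hη hν hh t ht
  obtain ⟨ht0, htT⟩ := ht
  have hηpos : 0 < η := lt_of_lt_of_le h0 hη.1
  have hνpos : 0 < ν := lt_of_lt_of_le h0 hν.1
  have hηε : ε ≤ η - ε := by have := hη.1; simp only [hεdef]; linarith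
  have hνε : ε ≤ ν - ε := by have := hν.1; simp only [hεdef]; linarith
  have hεη : ε ≤ η := le_trans hηε (by linarith)
  have hεν : ε ≤ ν := le_trans hνε (by linarith)
  rcases eq_or_lt_of_le hh.1 with hzero | hpos
  · -- h = 0
    rw [← hzero]
    simp [Real.rpow_zero, Real.zero_rpow (show p ≠ 0 by linarith)]
  · -- 0 < h
    have hh1 : h ≤ 1 := hh.2
    have hL : (0:ℝ) ≤ |Real.log t| := abs_nonneg _
    -- integrabilities
    have hI1 : IntegrableOn (fun s : ℝ => s ^ (η-1) * (t-s) ^ (ν-1)) (Set.Ioo 0 t) volume :=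
      ((betaIntegrable hηpos hνpos ht0).1).mono_set Set.Ioo_subset_Ioc_self
    have hI2 : IntegrableOn (fun s : ℝ => s ^ ((η-ε)-1) * (t-s) ^ (ν-1)) (Set.Ioo 0 t) volume :=
      ((betaIntegrable (lt_of_lt_of_le hε hηε) hνpos ht0).1).mono_set Set.Ioo_subset_Ioc_self
    have hI3 : IntegrableOn (fun s : ℝ => s ^ (η-1) * (t-s) ^ ((ν-ε)-1)) (Set.Ioo 0 t) volume :=
      ((betaIntegrable hηpos (lt_of_lt_of_le hε hνε) ht0).1).mono_set Set.Ioo_subset_Ioc_self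
    set c1 := h * A * (2 * (1 + |Real.log t|)) with hc1
    set c2 := h * A * t ^ ε with hc2
    have hc1pos : 0 ≤ c1 := by
      apply mul_nonneg (mul_nonneg hpos.le hA0.le); positivity
    have hc2pos : 0 ≤ c2 :=
      mul_nonneg (mul_nonneg hpos.le hA0.le) (Real.rpow_nonneg ht0.le _)
    rw [intervalIntegral.integral_of_le ht0.le, integral_Ioc_eq_integral_Ioo]
    have step1 : (∫ s in Set.Ioo (0:ℝ) t, s ^ (η - 1) * (t - s) ^ (ν - 1) *
            (|s ^ h - 1| ^ p + |(t - s) ^ h - 1| ^ p))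
        ≤ ∫ s in Set.Ioo (0:ℝ) t,
            (c1 * (s ^ (η-1) * (t-s) ^ (ν-1)) + c2 * (s ^ ((η-ε)-1) * (t-s) ^ (ν-1))
              + c2 * (s ^ (η-1) * (t-s) ^ ((ν-ε)-1))) := by
      apply integral_mono_of_nonneg
      · refine (ae_restrict_iff' measurableSet_Ioo).mpr (ae_of_all _ ?_)
        intro s hs
        exact mul_nonneg (mul_nonneg (Real.rpow_nonneg hs.1.le _)
          (Real.rpow_nonneg (by linarith [hs.2]) _))
          (add_nonneg (Real.rpow_nonneg (abs_nonneg _) _) (Real.rpow_nonneg (abs_nonneg _) _))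
      · exact ((hI1.const_mul c1).add (hI2.const_mul c2)).add (hI3.const_mul c2)
      · refine (ae_restrict_iff' measurableSet_Ioo).mpr (ae_of_all _ ?_)
        intro s hs
        obtain ⟨hs0, hst⟩ := hs
        have hts : 0 < t - s := by linarith
        have b1 := powBound hε hs0 hst.le htT hpos hh1 hp
        have b2 := powBound hε hts (by linarith : t - s ≤ t) htT hpos hh1 hp
        have key2 : s ^ (η-1) * (t-s) ^ (ν-1) * (t/s) ^ ε
            = t ^ ε * (s ^ ((η-ε)-1) * (t-s) ^ (ν-1)) := by
          rw [Real.div_rpow ht0.le hs0.le, div_eq_mul_inv,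
            show (η-ε)-1 = (η-1) + -ε by ring, Real.rpow_add hs0, Real.rpow_neg hs0.le]
          ring
        have key3 : s ^ (η-1) * (t-s) ^ (ν-1) * (t/(t-s)) ^ ε
            = t ^ ε * (s ^ (η-1) * (t-s) ^ ((ν-ε)-1)) := by
          rw [Real.div_rpow ht0.le hts.le, div_eq_mul_inv,
            show (ν-ε)-1 = (ν-1) + -ε by ring, Real.rpow_add hts, Real.rpow_neg hts.le]
          ring
        have hP : 0 ≤ s ^ (η-1) * (t-s) ^ (ν-1) :=
          mul_nonneg (Real.rpow_nonneg hs0.le _) (Real.rpow_nonneg hts.le _)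
        calc s ^ (η - 1) * (t - s) ^ (ν - 1) * (|s ^ h - 1| ^ p + |(t - s) ^ h - 1| ^ p)
            ≤ s ^ (η-1) * (t-s) ^ (ν-1) *
                (h * A * (1 + |Real.log t| + (t/s) ^ ε)
                  + h * A * (1 + |Real.log t| + (t/(t-s)) ^ ε)) :=
              mul_le_mul_of_nonneg_left (add_le_add b1 b2) hP
          _ = c1 * (s ^ (η-1) * (t-s) ^ (ν-1)) + c2 * (s ^ ((η-ε)-1) * (t-s) ^ (ν-1))
              + c2 * (s ^ (η-1) * (t-s) ^ ((ν-ε)-1)) := by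
              rw [hc1, hc2]
              linear_combination (h * A) * key2 + (h * A) * key3
    refine le_trans step1 ?_
    -- compute the integral of the bound
    have hIa : Integrable (fun s : ℝ => c1 * (s ^ (η-1) * (t-s) ^ (ν-1))
        + c2 * (s ^ ((η-ε)-1) * (t-s) ^ (ν-1))) (volume.restrict (Set.Ioo 0 t)) :=
      (hI1.const_mul c1).add (hI2.const_mul c2)
    have hIb : Integrable (fun s : ℝ => c2 * (s ^ (η-1) * (t-s) ^ ((ν-ε)-1)))
        (volume.restrict (Set.Ioo 0 t)) := hI3.const_mul c2
    have hIc : Integrable (fun s : ℝ => c1 * (s ^ (η-1) * (t-s) ^ (ν-1)))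
        (volume.restrict (Set.Ioo 0 t)) := hI1.const_mul c1
    have hId : Integrable (fun s : ℝ => c2 * (s ^ ((η-ε)-1) * (t-s) ^ (ν-1)))
        (volume.restrict (Set.Ioo 0 t)) := hI2.const_mul c2
    rw [integral_add hIa hIb, integral_add hIc hId,
      MeasureTheory.integral_const_mul, MeasureTheory.integral_const_mul,
      MeasureTheory.integral_const_mul]
    have master : ∀ a b : ℝ, ε ≤ a → ε ≤ b →
        (∫ s in Set.Ioo (0:ℝ) t, s ^ (a-1) * (t-s) ^ (b-1)) ≤ t ^ (a+b-1) * B := by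
      intro a b ha hb
      rw [← integral_Ioc_eq_integral_Ioo, ← intervalIntegral.integral_of_le ht0.le,
        betaScale ht0]
      exact mul_le_mul_of_nonneg_left (betaMono hε ha hb) (Real.rpow_nonneg ht0.le _)
    have J1 := master η ν hεη hεν
    have J2 := master (η-ε) ν hηε hεν
    have J3 := master η (ν-ε) hεη hνε
    have e2 : t ^ ε * t ^ ((η-ε)+ν-1) = t ^ (η+ν-1) := by
      rw [← Real.rpow_add ht0]; ring_nf
    have e3 : t ^ ε * t ^ (η+(ν-ε)-1) = t ^ (η+ν-1) := by
      rw [← Real.rpow_add ht0]; ring_nf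
    have hLp : |Real.log t| ≤ 1 + |Real.log t| ^ p := by
      rcases le_or_gt (|Real.log t|) 1 with hc | hc
      · linarith [Real.rpow_nonneg hL p]
      · have : |Real.log t| ^ (1:ℝ) ≤ |Real.log t| ^ p :=
          Real.rpow_le_rpow_of_exponent_le hc.le hp
        rw [Real.rpow_one] at this
        linarith
    have hfac : 4 + 2 * |Real.log t| ≤ 8 * (1 + |Real.log t| ^ p) := by
      have := Real.rpow_nonneg hL p
      linarith
    have hQ : 0 ≤ h * A * B * t ^ (η+ν-1) :=
      mul_nonneg (mul_nonneg (mul_nonneg hpos.le hA0.le) hB0) (Real.rpow_nonneg ht0.le _)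
    calc _ ≤ c1 * (t ^ (η+ν-1) * B) + c2 * (t ^ ((η-ε)+ν-1) * B) + c2 * (t ^ (η+(ν-ε)-1) * B) := by
          gcongr
      _ = (h * A * B * t ^ (η+ν-1)) * (4 + 2 * |Real.log t|) := by
          rw [hc1, hc2]
          linear_combination (h * A * B) * e2 + (h * A * B) * e3
      _ ≤ (h * A * B * t ^ (η+ν-1)) * (8 * (1 + |Real.log t| ^ p)) :=
          mul_le_mul_of_nonneg_left hfac hQ
      _ = 8 * A * B * h * t ^ (η+ν-1) * (1 + |Real.log t| ^ p) := by ring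
end

section
/- Let X be a Banach space, α₀ ∈ (0,1], α, α' ∈ [α₀, 1], 1 ≤ p ≤ ∞, and w ∈ L^p(0,T;X). Then there is a constant C = C(α₀, T) with ‖J^{α'} w − J^α w‖_{L^p(0,T;X)} ≤ C ‖w‖_{L^p(0,T;X)} |α' − α|. -/
open MeasureTheory
open scoped ENNReal

/-- Riemann–Liouville fractional integral for vector valued functions. -/
noncomputable def fracIntV {E : Type*} [NormedAddCommGroup E] [NormedSpace ℝ E]
    (α : ℝ) (u : ℝ → E) (t : ℝ) : E :=
  (Real.Gamma α)⁻¹ • ∫ s in (0:ℝ)..t, (t - s) ^ (α - 1) • u s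

lemma lint_reflect (t : ℝ) (f : ℝ → ℝ≥0∞) :
    ∫⁻ s in Set.Ioo 0 t, f (t - s) = ∫⁻ τ in Set.Ioo 0 t, f τ := by
  have hemb : MeasurableEmbedding (fun s : ℝ => t - s) :=
    (MeasurableEquiv.subLeft t).measurableEmbedding
  have hmp : MeasurePreserving (fun s : ℝ => t - s) volume volume :=
    Measure.measurePreserving_sub_left volume t
  have hpre : (fun s : ℝ => t - s) ⁻¹' Set.Ioo 0 t = Set.Ioo 0 t := by
    ext s; simp only [Set.mem_preimage, Set.mem_Ioo]; constructor <;> rintro ⟨h1, h2⟩ <;>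
      constructor <;> linarith
  calc ∫⁻ s in Set.Ioo 0 t, f (t - s) ∂volume
      = ∫⁻ s in (fun s : ℝ => t - s) ⁻¹' Set.Ioo 0 t, f (t - s) ∂volume := by rw [hpre]
    _ = ∫⁻ τ in Set.Ioo 0 t, f τ ∂volume :=
        hmp.setLIntegral_comp_preimage_emb hemb f (Set.Ioo 0 t)

lemma lint_shift (s T : ℝ) (f : ℝ → ℝ≥0∞) :
    ∫⁻ t in Set.Ioc s T, f (t - s) = ∫⁻ τ in Set.Ioc 0 (T - s), f τ := by
  have hemb : MeasurableEmbedding (fun t : ℝ => t - s) :=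
    (MeasurableEquiv.subRight s).measurableEmbedding
  have hmp : MeasurePreserving (fun t : ℝ => t - s) volume volume :=
    measurePreserving_sub_right volume s
  have hpre : (fun t : ℝ => t - s) ⁻¹' Set.Ioc 0 (T - s) = Set.Ioc s T := by
    ext t; simp only [Set.mem_preimage, Set.mem_Ioc]; constructor <;> rintro ⟨h1, h2⟩ <;>
      constructor <;> linarith
  calc ∫⁻ t in Set.Ioc s T, f (t - s) ∂volume
      = ∫⁻ t in (fun t : ℝ => t - s) ⁻¹' Set.Ioc 0 (T - s), f (t - s) ∂volume := by rw [hpre]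
    _ = ∫⁻ τ in Set.Ioc 0 (T - s), f τ ∂volume :=
        hmp.setLIntegral_comp_preimage_emb hemb f (Set.Ioc 0 (T - s))

lemma kernel_bounds (T α₀ : ℝ) (hT : 0 < T) (hα₀0 : 0 < α₀) (hα₀1 : α₀ ≤ 1) :
    ∃ c₁ c₂ : ℝ, 0 ≤ c₁ ∧ 0 ≤ c₂ ∧
      ∀ τ ∈ Set.Ioc (0:ℝ) T,
        (∀ β ∈ Set.Icc α₀ 1, τ ^ (β - 1) ≤ c₁ * τ ^ (α₀ - 1) + c₂ * τ ^ (α₀ / 2 - 1)) ∧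
        (∀ α ∈ Set.Icc α₀ 1, ∀ α' ∈ Set.Icc α₀ 1,
          |(Real.Gamma α')⁻¹ * τ ^ (α' - 1) - (Real.Gamma α)⁻¹ * τ ^ (α - 1)| ≤
            (c₁ * τ ^ (α₀ - 1) + c₂ * τ ^ (α₀ / 2 - 1)) * |α' - α|) := by
  -- complex reciprocal Gamma and its derivative
  set ψ : ℂ → ℂ := fun z => (Complex.Gamma z)⁻¹ with hψdef
  have hψ : Differentiable ℂ ψ := Complex.differentiable_one_div_Gamma
  have hψan : AnalyticOnNhd ℂ ψ Set.univ := hψ.differentiableOn.analyticOnNhd isOpen_univ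
  have hψ' : Continuous (deriv ψ) := continuousOn_univ.mp hψan.deriv.continuousOn
  set φ : ℝ → ℝ := fun x => (Real.Gamma x)⁻¹ with hφdef
  set d : ℝ → ℝ := fun x => (deriv ψ x).re with hddef
  have hφd : ∀ x : ℝ, HasDerivAt φ (d x) x := by
    intro x
    have h1 : HasDerivAt ψ (deriv ψ x) (x : ℂ) := (hψ (x : ℂ)).hasDerivAt
    have h2 := h1.real_of_complex
    have h3 : (fun x : ℝ => (ψ (x : ℂ)).re) = φ := by
      funext y
      simp only [hψdef, hφdef, Complex.Gamma_ofReal, ← Complex.ofReal_inv, Complex.ofReal_re]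
    rwa [h3] at h2
  have hdc : Continuous d := Complex.continuous_re.comp (hψ'.comp Complex.continuous_ofReal)
  have hφc : Continuous φ := continuous_iff_continuousAt.mpr fun x => (hφd x).continuousAt
  obtain ⟨D₀, hD₀⟩ := isCompact_Icc.exists_bound_of_continuousOn
    (hdc.continuousOn : ContinuousOn d (Set.Icc α₀ 1))
  obtain ⟨G₀, hG₀⟩ := isCompact_Icc.exists_bound_of_continuousOn
    (hφc.continuousOn : ContinuousOn φ (Set.Icc α₀ 1))
  set D : ℝ := max D₀ 1 with hDdef
  set G : ℝ := max G₀ 0 with hGdef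
  have hD1 : (1:ℝ) ≤ D := le_max_right _ _
  have hG0 : (0:ℝ) ≤ G := le_max_right _ _
  have hDb : ∀ x ∈ Set.Icc α₀ 1, |d x| ≤ D := fun x hx => (hD₀ x hx).trans (le_max_left _ _)
  have hGb : ∀ x ∈ Set.Icc α₀ 1, |φ x| ≤ G := fun x hx => (hG₀ x hx).trans (le_max_left _ _)
  set M : ℝ := max 1 (T ^ (1 - α₀)) with hMdef
  have hM1 : (1:ℝ) ≤ M := le_max_left _ _
  refine ⟨M * (D + G * T), M * (G * (2 / α₀)), by positivity, by positivity, ?_⟩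
  rintro τ ⟨hτ0, hτT⟩
  -- basic facts
  have hτpow_pos : ∀ e : ℝ, 0 < τ ^ e := fun e => Real.rpow_pos_of_pos hτ0 e
  -- uniform bound on τ ^ (β - 1)
  have hMτ : ∀ β ∈ Set.Icc α₀ 1, τ ^ (β - 1) ≤ M * τ ^ (α₀ - 1) := by
    rintro β ⟨hβ1, hβ2⟩
    rcases le_or_gt τ 1 with hτ1 | hτ1
    · have h1 : τ ^ (β - 1) ≤ τ ^ (α₀ - 1) :=
        Real.rpow_le_rpow_of_exponent_ge hτ0 hτ1 (by linarith)
      nlinarith [hτpow_pos (α₀ - 1)]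
    · have h1 : τ ^ (β - 1) ≤ 1 :=
        Real.rpow_le_one_of_one_le_of_nonpos hτ1.le (by linarith)
      have h2 : τ ^ (1 - α₀) ≤ T ^ (1 - α₀) :=
        Real.rpow_le_rpow hτ0.le hτT (by linarith)
      have h3 : τ ^ (1 - α₀) * τ ^ (α₀ - 1) = 1 := by
        rw [← Real.rpow_add hτ0]; norm_num
      have h4 : T ^ (1 - α₀) ≤ M := le_max_right _ _
      have h5 : 1 ≤ M * τ ^ (α₀ - 1) := by
        calc (1:ℝ) = τ ^ (1 - α₀) * τ ^ (α₀ - 1) := h3.symm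
          _ ≤ M * τ ^ (α₀ - 1) := by
              apply mul_le_mul_of_nonneg_right (h2.trans h4) (hτpow_pos _).le
      linarith
  -- bound on |log τ|
  have hlog : |Real.log τ| ≤ T + 2 / α₀ * τ ^ (-(α₀ / 2)) := by
    have hpow_pos := hτpow_pos (-(α₀ / 2))
    rcases le_or_gt 1 τ with hτ1 | hτ1
    · have h1 : Real.log τ ≤ T := by
        have := Real.log_le_sub_one_of_pos hτ0; linarith
      have h2 : 0 ≤ Real.log τ := Real.log_nonneg hτ1
      rw [abs_of_nonneg h2]
      have : 0 ≤ 2 / α₀ * τ ^ (-(α₀ / 2)) := by positivity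
      linarith
    · have h0 : Real.log τ < 0 := Real.log_neg hτ0 hτ1
      rw [abs_of_neg h0]
      have h1 : Real.log τ⁻¹ ≤ (τ⁻¹) ^ (α₀ / 2) / (α₀ / 2) :=
        Real.log_le_rpow_div (by positivity) (by positivity)
      have h2 : (τ⁻¹ : ℝ) ^ (α₀ / 2) = τ ^ (-(α₀ / 2)) := by
        rw [Real.inv_rpow hτ0.le, ← Real.rpow_neg hτ0.le]
      rw [Real.log_inv, h2] at h1
      have h3 : τ ^ (-(α₀ / 2)) / (α₀ / 2) = 2 / α₀ * τ ^ (-(α₀ / 2)) := by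
        field_simp
      rw [h3] at h1
      linarith
  -- derivative bound for f β := φ β * τ ^ (β - 1)
  set h : ℝ := M * (D + G * T) * τ ^ (α₀ - 1) + M * (G * (2 / α₀)) * τ ^ (α₀ / 2 - 1) with hhdef
  have hsplit : τ ^ (α₀ - 1) * τ ^ (-(α₀ / 2)) = τ ^ (α₀ / 2 - 1) := by
    rw [← Real.rpow_add hτ0]; ring_nf
  have hderiv_bound : ∀ β ∈ Set.Icc α₀ 1,
      |d β * τ ^ (β - 1) + φ β * (τ ^ (β - 1) * Real.log τ)| ≤ h := by
    intro β hβ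
    have hτβ := (hτpow_pos (β - 1)).le
    have e1 : |d β * τ ^ (β - 1) + φ β * (τ ^ (β - 1) * Real.log τ)| ≤
        D * τ ^ (β - 1) + G * (τ ^ (β - 1) * |Real.log τ|) := by
      calc |d β * τ ^ (β - 1) + φ β * (τ ^ (β - 1) * Real.log τ)|
          ≤ |d β * τ ^ (β - 1)| + |φ β * (τ ^ (β - 1) * Real.log τ)| := abs_add_le _ _
        _ ≤ D * τ ^ (β - 1) + G * (τ ^ (β - 1) * |Real.log τ|) := by
            rw [abs_mul, abs_mul, abs_mul, abs_of_nonneg hτβ]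
            have := hDb β hβ; have := hGb β hβ
            have := abs_nonneg (Real.log τ)
            gcongr <;> first | assumption | exact abs_nonneg _
    have e2 : τ ^ (β - 1) ≤ M * τ ^ (α₀ - 1) := hMτ β hβ
    have e3 : D * τ ^ (β - 1) ≤ D * (M * τ ^ (α₀ - 1)) := by
      apply mul_le_mul_of_nonneg_left e2 (by linarith)
    have e4 : τ ^ (β - 1) * |Real.log τ| ≤
        M * τ ^ (α₀ - 1) * (T + 2 / α₀ * τ ^ (-(α₀ / 2))) := by
      apply mul_le_mul e2 hlog (abs_nonneg _)
      positivity
    have e5 : G * (τ ^ (β - 1) * |Real.log τ|) ≤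
        G * (M * τ ^ (α₀ - 1) * (T + 2 / α₀ * τ ^ (-(α₀ / 2)))) :=
      mul_le_mul_of_nonneg_left e4 hG0
    have e6 : D * (M * τ ^ (α₀ - 1)) + G * (M * τ ^ (α₀ - 1) * (T + 2 / α₀ * τ ^ (-(α₀ / 2)))) = h := by
      rw [hhdef, ← hsplit]; ring
    calc |d β * τ ^ (β - 1) + φ β * (τ ^ (β - 1) * Real.log τ)|
        ≤ D * τ ^ (β - 1) + G * (τ ^ (β - 1) * |Real.log τ|) := e1
      _ ≤ D * (M * τ ^ (α₀ - 1)) + G * (M * τ ^ (α₀ - 1) * (T + 2 / α₀ * τ ^ (-(α₀ / 2)))) :=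
          add_le_add e3 e5
      _ = h := e6
  constructor
  · -- part (i)
    intro β hβ
    have h1 := hMτ β hβ
    have h2 : M * τ ^ (α₀ - 1) ≤ M * (D + G * T) * τ ^ (α₀ - 1) := by
      have h1' : (1:ℝ) ≤ D + G * T := by nlinarith [mul_nonneg hG0 hT.le]
      calc M * τ ^ (α₀ - 1) ≤ (D + G * T) * (M * τ ^ (α₀ - 1)) :=
            le_mul_of_one_le_left (by positivity) h1'
        _ = M * (D + G * T) * τ ^ (α₀ - 1) := by ring
    have h3 : 0 ≤ M * (G * (2 / α₀)) * τ ^ (α₀ / 2 - 1) := by positivity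
    calc τ ^ (β - 1) ≤ M * τ ^ (α₀ - 1) := h1
      _ ≤ M * (D + G * T) * τ ^ (α₀ - 1) := h2
      _ ≤ M * (D + G * T) * τ ^ (α₀ - 1) + M * (G * (2 / α₀)) * τ ^ (α₀ / 2 - 1) :=
          le_add_of_nonneg_right h3
  · -- part (ii): MVT
    intro α hα α' hα'
    set f : ℝ → ℝ := fun β => φ β * τ ^ (β - 1) with hfdef
    set f' : ℝ → ℝ := fun β => d β * τ ^ (β - 1) + φ β * (τ ^ (β - 1) * Real.log τ) with hf'def
    have hfd : ∀ β ∈ Set.Icc α₀ 1, HasDerivWithinAt f (f' β) (Set.Icc α₀ 1) β := by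
      intro β _
      have hpow : HasDerivAt (fun β : ℝ => τ ^ (β - 1)) (τ ^ (β - 1) * Real.log τ) β := by
        have h1 : HasDerivAt (fun β : ℝ => Real.log τ * (β - 1)) (Real.log τ) β := by
          simpa using ((hasDerivAt_id β).sub_const 1).const_mul (Real.log τ)
        have h2 := h1.exp
        have h3 : (fun β : ℝ => Real.exp (Real.log τ * (β - 1))) = fun β : ℝ => τ ^ (β - 1) := by
          funext y; rw [Real.rpow_def_of_pos hτ0]
        rw [h3] at h2
        convert h2 using 1
        rw [Real.rpow_def_of_pos hτ0]
      exact (((hφd β).mul hpow).congr_deriv (by rw [hf'def])).hasDerivWithinAt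
    have hbd : ∀ β ∈ Set.Icc α₀ 1, ‖f' β‖ ≤ h := fun β hβ => hderiv_bound β hβ
    have := Convex.norm_image_sub_le_of_norm_hasDerivWithin_le hfd hbd (convex_Icc _ _) hα hα'
    simpa [hfdef, Real.norm_eq_abs] using this

/-- Lipschitz dependence of the fractional integral on the order:
`‖J^{α'} w − J^α w‖_{L^p} ≤ C ‖w‖_{L^p} |α' − α|` uniformly for `α, α' ∈ [α₀,1]`. -/
theorem fracInt_lipschitz_in_order {X : Type*} [NormedAddCommGroup X] [NormedSpace ℝ X]
    [CompleteSpace X] (T α₀ : ℝ) (hT : 0 < T) (hα₀0 : 0 < α₀) (hα₀1 : α₀ ≤ 1) :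
    ∃ C : ℝ, ∀ α α' : ℝ, α ∈ Set.Icc α₀ 1 → α' ∈ Set.Icc α₀ 1 →
      ∀ p : ℝ≥0∞, 1 ≤ p → ∀ w : ℝ → X, MemLp w p (volume.restrict (Set.Ioc 0 T)) →
        eLpNorm (fun t => fracIntV α' w t - fracIntV α w t) p (volume.restrict (Set.Ioc 0 T)) ≤
          ENNReal.ofReal (C * |α' - α|) * eLpNorm w p (volume.restrict (Set.Ioc 0 T)) := by
  obtain ⟨c₁, c₂, hc₁, hc₂, hker⟩ := kernel_bounds T α₀ hT hα₀0 hα₀1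
  set h : ℝ → ℝ := fun τ => c₁ * τ ^ (α₀ - 1) + c₂ * τ ^ (α₀ / 2 - 1) with hhdef
  have hhm : Measurable h := by
    apply Measurable.add <;> exact (measurable_id.pow_const _).const_mul _
  have hh0 : ∀ τ ∈ Set.Ioc (0:ℝ) T, 0 ≤ h τ := by
    rintro τ ⟨hτ0, _⟩
    have hτ0' : (0:ℝ) ≤ τ := hτ0.le
    rw [hhdef]; positivity
  set Ke : ℝ≥0∞ := ∫⁻ τ in Set.Ioc 0 T, ENNReal.ofReal (h τ) with hKedef
  have hKelt : Ke < ⊤ := by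
    have hint : IntegrableOn h (Set.Ioc 0 T) volume := by
      have i1 : IntervalIntegrable (fun τ : ℝ => τ ^ (α₀ - 1)) volume 0 T :=
        intervalIntegral.intervalIntegrable_rpow' (by linarith)
      have i2 : IntervalIntegrable (fun τ : ℝ => τ ^ (α₀ / 2 - 1)) volume 0 T :=
        intervalIntegral.intervalIntegrable_rpow' (by linarith)
      have := (i1.const_mul c₁).add (i2.const_mul c₂)
      rwa [intervalIntegrable_iff_integrableOn_Ioc_of_le hT.le] at this
    calc Ke ≤ ∫⁻ τ in Set.Ioc 0 T, (‖h τ‖₊ : ℝ≥0∞) := by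
          apply lintegral_mono; intro τ
          show ENNReal.ofReal (h τ) ≤ (‖h τ‖₊ : ℝ≥0∞)
          rw [← enorm_eq_nnnorm, Real.enorm_eq_ofReal_abs]
          exact ENNReal.ofReal_le_ofReal (le_abs_self _)
      _ < ⊤ := hint.hasFiniteIntegral
  have hKe : Ke ≠ ⊤ := hKelt.ne
  refine ⟨Ke.toReal, ?_⟩
  intro α α' hα hα' p hp w hw
  set μT : Measure ℝ := volume.restrict (Set.Ioc 0 T) with hμTdef
  have hp0 : p ≠ 0 := (lt_of_lt_of_le one_pos hp).ne'
  -- measurable version of the norm of w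
  obtain ⟨U, hUm, hUW⟩ : ∃ U : ℝ → ℝ≥0∞, Measurable U ∧
      (fun s => (‖w s‖₊ : ℝ≥0∞)) =ᵐ[μT] U := by
    have hA := hw.1.enorm
    exact ⟨hA.mk _, hA.measurable_mk, hA.ae_eq_mk⟩
  set V : ℝ → ℝ≥0∞ := (Set.Ioc 0 T).indicator U with hVdef
  have hVm : Measurable V := hUm.indicator measurableSet_Ioc
  have hVW : (fun s => (‖w s‖₊ : ℝ≥0∞)) =ᵐ[μT] V := by
    filter_upwards [hUW, ae_restrict_mem measurableSet_Ioc] with s h1 h2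
    rw [h1, hVdef, Set.indicator_of_mem h2]
  -- the kernel
  set kk : ℝ → ℝ → ℝ≥0∞ :=
    fun t s => if 0 < s ∧ s < t then ENNReal.ofReal (h (t - s)) else 0 with hkkdef
  have hkkm : Measurable (Function.uncurry kk) := by
    refine Measurable.ite ?_ ?_ measurable_const
    · exact (measurableSet_lt measurable_const measurable_snd).inter
        (measurableSet_lt measurable_snd measurable_fst)
    · exact (hhm.comp (measurable_fst.sub measurable_snd)).ennreal_ofReal
  have hkkapp : ∀ t s, kk t s =
      (if 0 < s ∧ s < t then ENNReal.ofReal (h (t - s)) else 0) := fun t s => rfl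
  have hkk1 : ∀ s, Measurable fun t => kk t s :=
    fun s => hkkm.comp (measurable_id.prodMk measurable_const)
  have hkk2 : ∀ t, Measurable (kk t) :=
    fun t => hkkm.comp (measurable_const.prodMk measurable_id)
  set Φ : ℝ → ℝ≥0∞ := fun t => ∫⁻ s, kk t s * V s with hΦdef
  have hΦm : Measurable Φ :=
    (hkkm.mul (hVm.comp measurable_snd)).lintegral_prod_right'
  -- row sums
  have hrow : ∀ t, t ≤ T → ∫⁻ s, kk t s ≤ Ke := by
    intro t htT
    have e1 : (fun s => kk t s) =
        (Set.Ioo 0 t).indicator (fun s => ENNReal.ofReal (h (t - s))) := by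
      funext s
      by_cases hs : s ∈ Set.Ioo 0 t
      · rw [Set.indicator_of_mem hs, hkkapp]
        exact if_pos ⟨hs.1, hs.2⟩
      · rw [Set.indicator_of_notMem hs, hkkapp]
        rw [Set.mem_Ioo] at hs
        exact if_neg hs
    rw [e1, lintegral_indicator measurableSet_Ioo,
      lint_reflect t (fun τ => ENNReal.ofReal (h τ))]
    refine lintegral_mono' (Measure.restrict_mono ?_ le_rfl) le_rfl
    intro x hx
    exact ⟨hx.1, hx.2.le.trans htT⟩
  -- column sums
  have hcol : ∀ s, ∫⁻ t in Set.Ioc 0 T, kk t s ≤ Ke := by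
    intro s
    by_cases hs : 0 < s
    · have e1 : (fun t => kk t s) =
          (Set.Ioi s).indicator (fun t => ENNReal.ofReal (h (t - s))) := by
        funext t
        by_cases hts : t ∈ Set.Ioi s
        · rw [Set.indicator_of_mem hts, hkkapp]
          exact if_pos ⟨hs, hts⟩
        · rw [Set.indicator_of_notMem hts, hkkapp]
          rw [Set.mem_Ioi] at hts
          exact if_neg fun hc => hts hc.2
      rw [e1, lintegral_indicator measurableSet_Ioi,
        Measure.restrict_restrict measurableSet_Ioi]
      have e2 : Set.Ioi s ∩ Set.Ioc 0 T = Set.Ioc s T := by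
        ext x
        simp only [Set.mem_inter_iff, Set.mem_Ioi, Set.mem_Ioc]
        constructor
        · rintro ⟨h1, _, h3⟩; exact ⟨h1, h3⟩
        · rintro ⟨h1, h2⟩; exact ⟨h1, lt_trans hs h1, h2⟩
      rw [e2, lint_shift s T (fun τ => ENNReal.ofReal (h τ))]
      refine lintegral_mono' (Measure.restrict_mono ?_ le_rfl) le_rfl
      intro x hx
      exact ⟨hx.1, hx.2.trans (by linarith)⟩
    · have e1 : (fun t => kk t s) = fun _ => (0:ℝ≥0∞) := by
        funext t; rw [hkkapp]; exact if_neg fun hc => hs hc.1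
      rw [e1, lintegral_zero]
      exact zero_le
  -- Φ as an integral over (0, t)
  have hΦIoo : ∀ t, Φ t = ∫⁻ s in Set.Ioo 0 t, ENNReal.ofReal (h (t - s)) * V s := by
    intro t
    have e1 : (fun s => kk t s * V s) =
        (Set.Ioo 0 t).indicator (fun s => ENNReal.ofReal (h (t - s)) * V s) := by
      funext s
      by_cases hs : s ∈ Set.Ioo 0 t
      · rw [Set.indicator_of_mem hs, hkkapp, if_pos ⟨hs.1, hs.2⟩]
      · rw [Set.indicator_of_notMem hs, hkkapp]
        rw [Set.mem_Ioo] at hs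
        rw [if_neg hs, zero_mul]
    show (∫⁻ s, kk t s * V s) = _
    rw [e1, lintegral_indicator measurableSet_Ioo]
  -- the Schur-type estimate
  have hschur : ∀ p' : ℝ, 1 ≤ p' →
      ∫⁻ t in Set.Ioc 0 T, Φ t ^ p' ≤ Ke ^ p' * ∫⁻ s, V s ^ p' := by
    intro p' hp'
    have hp'0 : (0:ℝ) < p' := lt_of_lt_of_le one_pos hp'
    have step1 : ∀ t ∈ Set.Ioc (0:ℝ) T,
        Φ t ^ p' ≤ Ke ^ (p' - 1) * ∫⁻ s, kk t s * V s ^ p' := by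
      intro t ht
      rcases eq_or_lt_of_le hp' with heq | hlt
      · rw [← heq]
        simp only [ENNReal.rpow_one, sub_self, ENNReal.rpow_zero, one_mul]
        apply le_of_eq
        apply lintegral_congr
        intro s
        simp only [ENNReal.rpow_one]
      · set q := p'.conjExponent with hqdef
        have hpq : p'.HolderConjugate q := Real.HolderConjugate.conjExponent hlt
        have hq0 : (0:ℝ) < q := hpq.symm.pos
        have hsum : 1 / q + 1 / p' = 1 := by
          have h1 := hpq.inv_add_inv_eq_one
          rw [one_div, one_div]
          linarith
        have hfm : Measurable fun s => kk t s ^ (1 / q) := (hkk2 t).pow_const _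
        have hgm : Measurable fun s => kk t s ^ (1 / p') * V s :=
          ((hkk2 t).pow_const _).mul hVm
        have e1 : ∫⁻ s, ((fun s => kk t s ^ (1 / q)) s) ^ q ∂volume = ∫⁻ s, kk t s := by
          apply lintegral_congr
          intro s
          show (kk t s ^ (1 / q)) ^ q = kk t s
          rw [← ENNReal.rpow_mul, one_div, inv_mul_cancel₀ hq0.ne', ENNReal.rpow_one]
        have e2 : ∫⁻ s, ((fun s => kk t s ^ (1 / p') * V s) s) ^ p' ∂volume
            = ∫⁻ s, kk t s * V s ^ p' := by
          apply lintegral_congr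
          intro s
          show (kk t s ^ (1 / p') * V s) ^ p' = kk t s * V s ^ p'
          rw [ENNReal.mul_rpow_of_nonneg _ _ hp'0.le, ← ENNReal.rpow_mul,
            one_div, inv_mul_cancel₀ hp'0.ne', ENNReal.rpow_one]
        have hH2 : Φ t ≤ Ke ^ (1 / q) * (∫⁻ s, kk t s * V s ^ p') ^ (1 / p') := by
          calc Φ t = ∫⁻ s, ((fun s => kk t s ^ (1 / q)) *
                (fun s => kk t s ^ (1 / p') * V s)) s := by
                apply lintegral_congr
                intro s
                simp only [Pi.mul_apply]
                rw [← mul_assoc,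
                  ← ENNReal.rpow_add_of_nonneg _ _ (by positivity) (by positivity),
                  hsum, ENNReal.rpow_one]
            _ ≤ (∫⁻ s, ((fun s => kk t s ^ (1 / q)) s) ^ q ∂volume) ^ (1 / q) *
                (∫⁻ s, ((fun s => kk t s ^ (1 / p') * V s) s) ^ p' ∂volume) ^ (1 / p') :=
                ENNReal.lintegral_mul_le_Lp_mul_Lq volume hpq.symm
                  hfm.aemeasurable hgm.aemeasurable
            _ = (∫⁻ s, kk t s) ^ (1 / q) * (∫⁻ s, kk t s * V s ^ p') ^ (1 / p') := by
                rw [e1, e2]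
            _ ≤ Ke ^ (1 / q) * (∫⁻ s, kk t s * V s ^ p') ^ (1 / p') :=
                mul_le_mul_left (ENNReal.rpow_le_rpow (hrow t ht.2) (by positivity)) _
        have hexp : 1 / q * p' = p' - 1 := by
          have h1 : 1 / q = 1 - 1 / p' := by linarith
          rw [h1, sub_mul, one_mul, one_div, inv_mul_cancel₀ hp'0.ne']
        calc Φ t ^ p' ≤ (Ke ^ (1 / q) * (∫⁻ s, kk t s * V s ^ p') ^ (1 / p')) ^ p' :=
              ENNReal.rpow_le_rpow hH2 hp'0.le
          _ = Ke ^ (p' - 1) * ∫⁻ s, kk t s * V s ^ p' := by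
              rw [ENNReal.mul_rpow_of_nonneg _ _ hp'0.le, ← ENNReal.rpow_mul,
                ← ENNReal.rpow_mul, hexp, one_div, inv_mul_cancel₀ hp'0.ne',
                ENNReal.rpow_one]
    have hKetop : Ke ^ (p' - 1) ≠ ⊤ := ENNReal.rpow_ne_top_of_nonneg (by linarith) hKe
    have step2 : ∫⁻ t in Set.Ioc 0 T, Φ t ^ p' ≤
        Ke ^ (p' - 1) * ∫⁻ t in Set.Ioc 0 T, ∫⁻ s, kk t s * V s ^ p' := by
      rw [← lintegral_const_mul' _ _ hKetop]
      apply lintegral_mono_ae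
      filter_upwards [ae_restrict_mem measurableSet_Ioc] with t ht using step1 t ht
    have hswap : ∫⁻ t in Set.Ioc 0 T, ∫⁻ s, kk t s * V s ^ p'
        = ∫⁻ s, ∫⁻ t in Set.Ioc 0 T, kk t s * V s ^ p' := by
      apply lintegral_lintegral_swap
      exact (hkkm.mul ((hVm.comp measurable_snd).pow_const _)).aemeasurable
    have step3 : ∫⁻ s, ∫⁻ t in Set.Ioc 0 T, kk t s * V s ^ p' ≤ Ke * ∫⁻ s, V s ^ p' := by
      rw [← lintegral_const_mul' _ _ hKe]
      apply lintegral_mono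
      intro s
      calc ∫⁻ t in Set.Ioc 0 T, kk t s * V s ^ p'
          = (∫⁻ t in Set.Ioc 0 T, kk t s) * V s ^ p' := lintegral_mul_const _ (hkk1 s)
        _ ≤ Ke * V s ^ p' := mul_le_mul_left (hcol s) _
    have hKepow : Ke ^ (p' - 1) * Ke = Ke ^ p' := by
      nth_rewrite 2 [← ENNReal.rpow_one Ke]
      rw [← ENNReal.rpow_add_of_nonneg (p' - 1) 1 (by linarith) zero_le_one, sub_add_cancel]
    calc ∫⁻ t in Set.Ioc 0 T, Φ t ^ p'
        ≤ Ke ^ (p' - 1) * ∫⁻ t in Set.Ioc 0 T, ∫⁻ s, kk t s * V s ^ p' := step2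
      _ ≤ Ke ^ (p' - 1) * (Ke * ∫⁻ s, V s ^ p') := by
          rw [hswap]; exact mul_le_mul_right step3 _
      _ = Ke ^ p' * ∫⁻ s, V s ^ p' := by rw [← mul_assoc, hKepow]
  -- relating ∫⁻ V^p' to the norm of w
  have hVnorm : ∀ p' : ℝ, 0 < p' →
      ∫⁻ s, V s ^ p' ∂volume = ∫⁻ s, (‖w s‖₊ : ℝ≥0∞) ^ p' ∂μT := by
    intro p' hp'0
    have e1 : (fun s => V s ^ p') = (Set.Ioc 0 T).indicator (fun s => U s ^ p') := by
      funext s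
      by_cases hs : s ∈ Set.Ioc 0 T
      · rw [Set.indicator_of_mem hs, hVdef, Set.indicator_of_mem hs]
      · rw [Set.indicator_of_notMem hs, hVdef, Set.indicator_of_notMem hs,
          ENNReal.zero_rpow_of_pos hp'0]
    rw [e1, lintegral_indicator measurableSet_Ioc]
    apply lintegral_congr_ae
    filter_upwards [hUW] with s h1
    rw [h1]
  -- pointwise bound
  have hfin : ∀ᵐ t ∂μT, Φ t < ⊤ := by
    rcases eq_or_ne p ⊤ with hptop | hptop
    · have hB : eLpNormEssSup w μT ≠ ⊤ := by
        have h2 := hw.2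
        rw [hptop, eLpNorm_exponent_top] at h2
        exact h2.ne
      have hVB : ∀ᵐ s ∂(volume : Measure ℝ), V s ≤ eLpNormEssSup w μT := by
        have h1 : ∀ᵐ s ∂μT, V s ≤ eLpNormEssSup w μT := by
          filter_upwards [enorm_ae_le_eLpNormEssSup w μT, hVW] with s a b
          rw [← b]; exact a
        rw [hμTdef, ae_restrict_iff' measurableSet_Ioc] at h1
        filter_upwards [h1] with s hs
        by_cases hmem : s ∈ Set.Ioc 0 T
        · exact hs hmem
        · rw [hVdef, Set.indicator_of_notMem hmem]
          exact zero_le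
      filter_upwards [ae_restrict_mem measurableSet_Ioc] with t ht
      calc Φ t ≤ ∫⁻ s, kk t s * eLpNormEssSup w μT :=
            lintegral_mono_ae (hVB.mono fun s hs => mul_le_mul_right hs _)
        _ = (∫⁻ s, kk t s) * eLpNormEssSup w μT := lintegral_mul_const _ (hkk2 t)
        _ ≤ Ke * eLpNormEssSup w μT := mul_le_mul_left (hrow t ht.2) _
        _ < ⊤ := ENNReal.mul_lt_top hKelt (lt_top_iff_ne_top.mpr hB)
    · set p' : ℝ := p.toReal with hp'def
      have hp'1 : 1 ≤ p' := by
        rw [← ENNReal.toReal_one]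
        exact (ENNReal.toReal_le_toReal (by simp) hptop).mpr hp
      have hp'0 : (0:ℝ) < p' := lt_of_lt_of_le one_pos hp'1
      have hww : ∫⁻ s, (‖w s‖₊ : ℝ≥0∞) ^ p' ∂μT = (eLpNorm w p μT) ^ p' := by
        rw [eLpNorm_eq_lintegral_rpow_enorm_toReal hp0 hptop, ← ENNReal.rpow_mul, one_div,
          inv_mul_cancel₀ hp'0.ne', ENNReal.rpow_one]
        rfl
      have hlt : ∫⁻ t in Set.Ioc 0 T, Φ t ^ p' < ⊤ := by
        refine lt_of_le_of_lt (hschur p' hp'1) ?_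
        rw [hVnorm p' hp'0, hww]
        exact ENNReal.mul_lt_top
          (lt_top_iff_ne_top.mpr (ENNReal.rpow_ne_top_of_nonneg hp'0.le hKe))
          (ENNReal.rpow_lt_top_of_nonneg hp'0.le hw.2.ne)
      have hae := ae_lt_top' ((hΦm.pow_const p').aemeasurable) hlt.ne
      filter_upwards [hae] with t hfoo
      exact (ENNReal.rpow_lt_top_iff_of_pos hp'0).mp hfoo
  have hpt : ∀ᵐ t ∂μT, (‖fracIntV α' w t - fracIntV α w t‖₊ : ℝ≥0∞) ≤
      ENNReal.ofReal |α' - α| * Φ t := by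
    filter_upwards [hfin, ae_restrict_mem measurableSet_Ioc] with t hΦfin ht
    obtain ⟨ht0, htT⟩ := ht
    have hsub : Set.Ioo 0 t ⊆ Set.Ioc 0 T := fun x hx => ⟨hx.1, hx.2.le.trans htT⟩
    have hVWt : (fun s => (‖w s‖₊ : ℝ≥0∞)) =ᵐ[volume.restrict (Set.Ioo 0 t)] V :=
      ae_restrict_of_ae_restrict_of_subset hsub hVW
    have hΦt : Φ t = ∫⁻ s in Set.Ioo 0 t, ENNReal.ofReal (h (t - s)) * (‖w s‖₊ : ℝ≥0∞) := by
      rw [hΦIoo t]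
      apply lintegral_congr_ae
      filter_upwards [hVWt] with s hs
      rw [hs]
    have hτmem : ∀ s ∈ Set.Ioo (0:ℝ) t, t - s ∈ Set.Ioc (0:ℝ) T :=
      fun s hs => ⟨by linarith [hs.2], by linarith [hs.1]⟩
    have hwae : AEStronglyMeasurable w (volume.restrict (Set.Ioo 0 t)) :=
      hw.1.mono_measure (Measure.restrict_mono hsub le_rfl)
    have hI : ∀ β ∈ Set.Icc α₀ 1,
        IntegrableOn (fun s => (t - s) ^ (β - 1) • w s) (Set.Ioo 0 t) volume := by
      intro β hβ
      have hm : Measurable fun s : ℝ => (t - s) ^ (β - 1) :=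
        (measurable_const.sub measurable_id).pow_const _
      constructor
      · exact hm.aestronglyMeasurable.smul hwae
      · show (∫⁻ s in Set.Ioo 0 t, (‖(t - s) ^ (β - 1) • w s‖₊ : ℝ≥0∞)) < ⊤
        have hb : ∀ᵐ s ∂volume.restrict (Set.Ioo 0 t),
            (‖(t - s) ^ (β - 1) • w s‖₊ : ℝ≥0∞) ≤
              ENNReal.ofReal (h (t - s)) * (‖w s‖₊ : ℝ≥0∞) := by
          filter_upwards [ae_restrict_mem measurableSet_Ioo] with s hs
          have hts := hτmem s hs
          have h1 : (0:ℝ) ≤ (t - s) ^ (β - 1) := Real.rpow_nonneg (by linarith [hs.2]) _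
          rw [nnnorm_smul, ENNReal.coe_mul, ← enorm_eq_nnnorm, Real.enorm_eq_ofReal_abs, abs_of_nonneg h1]
          exact mul_le_mul_left (ENNReal.ofReal_le_ofReal ((hker _ hts).1 β hβ)) _
        calc (∫⁻ s in Set.Ioo 0 t, (‖(t - s) ^ (β - 1) • w s‖₊ : ℝ≥0∞))
            ≤ ∫⁻ s in Set.Ioo 0 t, ENNReal.ofReal (h (t - s)) * (‖w s‖₊ : ℝ≥0∞) :=
              lintegral_mono_ae hb
          _ = Φ t := hΦt.symm
          _ < ⊤ := hΦfin
    have hrep : ∀ β, fracIntV β w t =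
        ∫ s in Set.Ioo 0 t, ((Real.Gamma β)⁻¹ * (t - s) ^ (β - 1)) • w s := by
      intro β
      rw [fracIntV, intervalIntegral.integral_of_le ht0.le, integral_Ioc_eq_integral_Ioo,
        ← integral_smul]
      simp_rw [smul_smul]
    have hint : ∀ β ∈ Set.Icc α₀ 1,
        IntegrableOn (fun s => ((Real.Gamma β)⁻¹ * (t - s) ^ (β - 1)) • w s)
          (Set.Ioo 0 t) volume := by
      intro β hβ
      have h2 := (hI β hβ).smul (Real.Gamma β)⁻¹
      refine h2.congr (ae_of_all _ fun s => ?_)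
      show (Real.Gamma β)⁻¹ • ((t - s) ^ (β - 1) • w s) = _
      rw [smul_smul]
    have hFt : fracIntV α' w t - fracIntV α w t =
        ∫ s in Set.Ioo 0 t,
          ((Real.Gamma α')⁻¹ * (t - s) ^ (α' - 1) -
            (Real.Gamma α)⁻¹ * (t - s) ^ (α - 1)) • w s := by
      rw [hrep α', hrep α, ← integral_sub (hint α' hα') (hint α hα)]
      simp_rw [sub_smul]
    calc (‖fracIntV α' w t - fracIntV α w t‖₊ : ℝ≥0∞)
        ≤ ∫⁻ s in Set.Ioo 0 t,
            (‖((Real.Gamma α')⁻¹ * (t - s) ^ (α' - 1) -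
              (Real.Gamma α)⁻¹ * (t - s) ^ (α - 1)) • w s‖₊ : ℝ≥0∞) := by
          rw [hFt]
          exact enorm_integral_le_lintegral_enorm _
      _ ≤ ∫⁻ s in Set.Ioo 0 t,
            ENNReal.ofReal |α' - α| * (ENNReal.ofReal (h (t - s)) * (‖w s‖₊ : ℝ≥0∞)) := by
          apply lintegral_mono_ae
          filter_upwards [ae_restrict_mem measurableSet_Ioo] with s hs
          have hts := hτmem s hs
          rw [nnnorm_smul, ENNReal.coe_mul, ← enorm_eq_nnnorm, Real.enorm_eq_ofReal_abs]
          have hmvt := (hker _ hts).2 α hα α' hα'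
          calc ENNReal.ofReal |(Real.Gamma α')⁻¹ * (t - s) ^ (α' - 1) -
                (Real.Gamma α)⁻¹ * (t - s) ^ (α - 1)| * (‖w s‖₊ : ℝ≥0∞)
              ≤ ENNReal.ofReal (h (t - s) * |α' - α|) * (‖w s‖₊ : ℝ≥0∞) :=
                mul_le_mul_left (ENNReal.ofReal_le_ofReal hmvt) _
            _ = ENNReal.ofReal |α' - α| * (ENNReal.ofReal (h (t - s)) * (‖w s‖₊ : ℝ≥0∞)) := by
                rw [ENNReal.ofReal_mul (hh0 _ hts), ← mul_assoc, mul_comm (ENNReal.ofReal (h (t - s)))]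
      _ = ENNReal.ofReal |α' - α| * Φ t := by
          rw [lintegral_const_mul' _ _ ENNReal.ofReal_ne_top, hΦt]
  -- conclusion
  have hCmul : ENNReal.ofReal (Ke.toReal * |α' - α|) = ENNReal.ofReal |α' - α| * Ke := by
    rw [ENNReal.ofReal_mul ENNReal.toReal_nonneg, ENNReal.ofReal_toReal hKe, mul_comm]
  rcases eq_or_ne p ⊤ with hptop | hptop
  · rw [hptop, eLpNorm_exponent_top, eLpNorm_exponent_top]
    have hB : eLpNormEssSup w μT ≠ ⊤ := by
      have h2 := hw.2
      rw [hptop, eLpNorm_exponent_top] at h2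
      exact h2.ne
    have hΦB : ∀ᵐ t ∂μT, Φ t ≤ Ke * eLpNormEssSup w μT := by
      have hVB : ∀ᵐ s ∂(volume : Measure ℝ), V s ≤ eLpNormEssSup w μT := by
        have h1 : ∀ᵐ s ∂μT, V s ≤ eLpNormEssSup w μT := by
          filter_upwards [enorm_ae_le_eLpNormEssSup w μT, hVW] with s a b
          rw [← b]; exact a
        rw [hμTdef, ae_restrict_iff' measurableSet_Ioc] at h1
        filter_upwards [h1] with s hs
        by_cases hmem : s ∈ Set.Ioc 0 T
        · exact hs hmem
        · rw [hVdef, Set.indicator_of_notMem hmem]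
          exact zero_le
      filter_upwards [ae_restrict_mem measurableSet_Ioc] with t ht
      calc Φ t ≤ ∫⁻ s, kk t s * eLpNormEssSup w μT :=
            lintegral_mono_ae (hVB.mono fun s hs => mul_le_mul_right hs _)
        _ = (∫⁻ s, kk t s) * eLpNormEssSup w μT := lintegral_mul_const _ (hkk2 t)
        _ ≤ Ke * eLpNormEssSup w μT := mul_le_mul_left (hrow t ht.2) _
    have hbound : ∀ᵐ t ∂μT, (‖fracIntV α' w t - fracIntV α w t‖₊ : ℝ≥0∞) ≤
        ENNReal.ofReal (Ke.toReal * |α' - α|) * eLpNormEssSup w μT := by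
      filter_upwards [hpt, hΦB] with t h1 h2
      calc (‖fracIntV α' w t - fracIntV α w t‖₊ : ℝ≥0∞)
          ≤ ENNReal.ofReal |α' - α| * Φ t := h1
        _ ≤ ENNReal.ofReal |α' - α| * (Ke * eLpNormEssSup w μT) := mul_le_mul_right h2 _
        _ = ENNReal.ofReal (Ke.toReal * |α' - α|) * eLpNormEssSup w μT := by
            rw [hCmul, mul_assoc]
    exact essSup_le_of_ae_le _ hbound
  · set p' : ℝ := p.toReal with hp'def
    have hp'1 : 1 ≤ p' := by
      rw [← ENNReal.toReal_one]
      exact (ENNReal.toReal_le_toReal (by simp) hptop).mpr hp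
    have hp'0 : (0:ℝ) < p' := lt_of_lt_of_le one_pos hp'1
    rw [eLpNorm_eq_lintegral_rpow_enorm_toReal hp0 hptop, eLpNorm_eq_lintegral_rpow_enorm_toReal hp0 hptop]
    have hnum : ∫⁻ t, (‖fracIntV α' w t - fracIntV α w t‖₊ : ℝ≥0∞) ^ p' ∂μT ≤
        (ENNReal.ofReal |α' - α|) ^ p' * (Ke ^ p' * ∫⁻ s, (‖w s‖₊ : ℝ≥0∞) ^ p' ∂μT) := by
      calc ∫⁻ t, (‖fracIntV α' w t - fracIntV α w t‖₊ : ℝ≥0∞) ^ p' ∂μT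
          ≤ ∫⁻ t, (ENNReal.ofReal |α' - α| * Φ t) ^ p' ∂μT := by
            apply lintegral_mono_ae
            filter_upwards [hpt] with t h1
            exact ENNReal.rpow_le_rpow h1 hp'0.le
        _ = (ENNReal.ofReal |α' - α|) ^ p' * ∫⁻ t, Φ t ^ p' ∂μT := by
            rw [← lintegral_const_mul' _ _
              (ENNReal.rpow_ne_top_of_nonneg hp'0.le ENNReal.ofReal_ne_top)]
            apply lintegral_congr
            intro t
            rw [ENNReal.mul_rpow_of_nonneg _ _ hp'0.le]
        _ ≤ (ENNReal.ofReal |α' - α|) ^ p' * (Ke ^ p' * ∫⁻ s, (‖w s‖₊ : ℝ≥0∞) ^ p' ∂μT) := by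
            apply mul_le_mul_right
            rw [← hVnorm p' hp'0]
            exact hschur p' hp'1
    calc (∫⁻ t, (‖fracIntV α' w t - fracIntV α w t‖₊ : ℝ≥0∞) ^ p' ∂μT) ^ (1 / p')
        ≤ ((ENNReal.ofReal |α' - α|) ^ p' *
            (Ke ^ p' * ∫⁻ s, (‖w s‖₊ : ℝ≥0∞) ^ p' ∂μT)) ^ (1 / p') :=
          ENNReal.rpow_le_rpow hnum (by positivity)
      _ = ENNReal.ofReal (Ke.toReal * |α' - α|) *
            (∫⁻ s, (‖w s‖₊ : ℝ≥0∞) ^ p' ∂μT) ^ (1 / p') := by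
          rw [ENNReal.mul_rpow_of_nonneg _ _ (by positivity : (0:ℝ) ≤ 1 / p'),
            ENNReal.mul_rpow_of_nonneg _ _ (by positivity : (0:ℝ) ≤ 1 / p'),
            ← ENNReal.rpow_mul, ← ENNReal.rpow_mul, mul_one_div, div_self hp'0.ne',
            ENNReal.rpow_one, ENNReal.rpow_one, hCmul, ← mul_assoc]
end

section
/- Suppose K_β : X → Y are bounded linear operators with ‖K_β − K_{β₀}‖ → 0 as β → β₀, and the family (K_β) has a β₀-unstable inverse at x₀ (there exist β_n → β₀ and x_n with K_{β_n} x_n → K_{β₀} x₀ but x_n ↛ x₀). Then K_{β₀} itself has an unstable inverse at x₀: there is a sequence (u_n) ⊂ X with K_{β₀} u_n → K_{β₀} x₀ in Y but u_n ↛ x₀ in X. -/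
open Filter

/-- If the bounded linear operators `K_β` converge to `K_{β₀}` in operator norm and the
family `(K_β)` has a `β₀`-unstable inverse at `x₀`, then `K_{β₀}` itself has an unstable
inverse at `x₀`. -/
theorem operator_norm_limit_unstable_inverse {X Y : Type*}
    [NormedAddCommGroup X] [NormedSpace ℝ X] [NormedAddCommGroup Y] [NormedSpace ℝ Y]
    (β₀ : ℝ) (K : ℝ → X →L[ℝ] Y) (x₀ : X)
    (hconv : Tendsto (fun β => ‖K β - K β₀‖) (nhds β₀) (nhds 0))
    (hunst : ∃ (βs : ℕ → ℝ) (xs : ℕ → X),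
      Tendsto βs atTop (nhds β₀) ∧
      Tendsto (fun n => K (βs n) (xs n)) atTop (nhds (K β₀ x₀)) ∧
      ¬ Tendsto xs atTop (nhds x₀)) :
    ∃ u : ℕ → X,
      Tendsto (fun n => K β₀ (u n)) atTop (nhds (K β₀ x₀)) ∧
      ¬ Tendsto u atTop (nhds x₀) := by
  obtain ⟨βs, xs, hβ, hK, hx⟩ := hunst
  have hop : Tendsto (fun n => ‖K (βs n) - K β₀‖) atTop (nhds 0) := hconv.comp hβ
  by_cases hb : ∃ C : ℝ, ∀ n, ‖xs n‖ ≤ C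
  · -- bounded case: take u = xs
    obtain ⟨C, hC⟩ := hb
    refine ⟨xs, ?_, hx⟩
    have hdiff : Tendsto (fun n => K β₀ (xs n) - K (βs n) (xs n)) atTop (nhds 0) := by
      have hbound : ∀ n, ‖K β₀ (xs n) - K (βs n) (xs n)‖ ≤ ‖K (βs n) - K β₀‖ * C := by
        intro n
        have h1 : K β₀ (xs n) - K (βs n) (xs n) = (K β₀ - K (βs n)) (xs n) := by simp
        rw [h1]
        calc ‖(K β₀ - K (βs n)) (xs n)‖ ≤ ‖K β₀ - K (βs n)‖ * ‖xs n‖ :=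
              (K β₀ - K (βs n)).le_opNorm _
          _ ≤ ‖K β₀ - K (βs n)‖ * C := mul_le_mul_of_nonneg_left (hC n) (norm_nonneg _)
          _ = ‖K (βs n) - K β₀‖ * C := by rw [norm_sub_rev]
      have hg : Tendsto (fun n => ‖K (βs n) - K β₀‖ * C) atTop (nhds 0) := by
        simpa using hop.mul_const C
      exact squeeze_zero_norm hbound hg
    have := hdiff.add hK
    simpa using this
  · -- unbounded case
    push_neg at hb
    have hfreq : ∀ n : ℕ, ∃ᶠ k in atTop, (n : ℝ) < ‖xs k‖ := by
      intro n
      rw [frequently_atTop]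
      intro N
      obtain ⟨k, hk⟩ := hb ((n : ℝ) + ∑ i ∈ Finset.range N, ‖xs i‖)
      refine ⟨k, ?_, ?_⟩
      · by_contra hkN
        push_neg at hkN
        have h1 : ‖xs k‖ ≤ ∑ i ∈ Finset.range N, ‖xs i‖ :=
          Finset.single_le_sum (f := fun i => ‖xs i‖) (fun i _ => norm_nonneg _)
            (Finset.mem_range.2 hkN)
        have h2 : (0 : ℝ) ≤ (n : ℝ) := Nat.cast_nonneg n
        linarith
      · have h2 : (0 : ℝ) ≤ ∑ i ∈ Finset.range N, ‖xs i‖ :=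
          Finset.sum_nonneg fun i _ => norm_nonneg _
        linarith
    obtain ⟨φ, hφmono, hφ⟩ := Filter.extraction_forall_of_frequently hfreq
    have hpos : ∀ k, 0 < ‖xs (φ k)‖ := fun k =>
      lt_of_le_of_lt (Nat.cast_nonneg k) (hφ k)
    set z : ℕ → X := fun k => ‖xs (φ k)‖⁻¹ • xs (φ k) with hz
    have hznorm : ∀ k, ‖z k‖ = 1 := by
      intro k
      rw [hz]
      simp only [norm_smul, norm_inv, norm_norm]
      exact inv_mul_cancel₀ (ne_of_gt (hpos k))
    have hinv : Tendsto (fun k => ‖xs (φ k)‖⁻¹) atTop (nhds 0) := by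
      have hinf : Tendsto (fun k => ‖xs (φ k)‖) atTop atTop :=
        tendsto_atTop_mono (fun k => le_of_lt (hφ k)) tendsto_natCast_atTop_atTop
      exact hinf.inv_tendsto_atTop
    have hKφ : Tendsto (fun k => K (βs (φ k)) (xs (φ k))) atTop (nhds (K β₀ x₀)) :=
      hK.comp (hφmono.tendsto_atTop)
    have hopφ : Tendsto (fun k => ‖K (βs (φ k)) - K β₀‖) atTop (nhds 0) :=
      hop.comp (hφmono.tendsto_atTop)
    have hKz : Tendsto (fun k => K β₀ (z k)) atTop (nhds 0) := by
      have hbound : ∀ k, ‖K β₀ (z k)‖ ≤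
          ‖K (βs (φ k)) - K β₀‖ + ‖xs (φ k)‖⁻¹ * ‖K (βs (φ k)) (xs (φ k))‖ := by
        intro k
        have hsplit : K β₀ (z k) = (K β₀ - K (βs (φ k))) (z k)
            + ‖xs (φ k)‖⁻¹ • (K (βs (φ k)) (xs (φ k))) := by
          simp [hz, map_smul, smul_sub]
        rw [hsplit]
        calc ‖(K β₀ - K (βs (φ k))) (z k) + ‖xs (φ k)‖⁻¹ • (K (βs (φ k)) (xs (φ k)))‖
            ≤ ‖(K β₀ - K (βs (φ k))) (z k)‖ + ‖‖xs (φ k)‖⁻¹ • (K (βs (φ k)) (xs (φ k)))‖ :=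
              norm_add_le _ _
          _ ≤ ‖K (βs (φ k)) - K β₀‖ + ‖xs (φ k)‖⁻¹ * ‖K (βs (φ k)) (xs (φ k))‖ := by
              gcongr
              · calc ‖(K β₀ - K (βs (φ k))) (z k)‖ ≤ ‖K β₀ - K (βs (φ k))‖ * ‖z k‖ :=
                      (K β₀ - K (βs (φ k))).le_opNorm _
                  _ = ‖K (βs (φ k)) - K β₀‖ := by rw [hznorm k, mul_one, norm_sub_rev]
              · rw [norm_smul, norm_inv, norm_norm]
      have hg : Tendsto (fun k => ‖K (βs (φ k)) - K β₀‖
          + ‖xs (φ k)‖⁻¹ * ‖K (βs (φ k)) (xs (φ k))‖) atTop (nhds 0) := by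
        have := hopφ.add (hinv.mul (hKφ.norm))
        simpa using this
      exact squeeze_zero_norm hbound hg
    refine ⟨fun k => x₀ + z k, ?_, ?_⟩
    · have : Tendsto (fun k => K β₀ x₀ + K β₀ (z k)) atTop (nhds (K β₀ x₀ + 0)) :=
        tendsto_const_nhds.add hKz
      simpa [map_add] using this
    · intro hcon
      have h1 : Tendsto (fun k => ‖(x₀ + z k) - x₀‖) atTop (nhds 0) := by
        have := hcon.sub (tendsto_const_nhds (x := x₀))
        simpa using this.norm
      have h2 : ∀ k, ‖(x₀ + z k) - x₀‖ = 1 := by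
        intro k; simp [hznorm k]
      rw [tendsto_congr h2] at h1
      exact one_ne_zero (tendsto_nhds_unique tendsto_const_nhds h1)
end
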